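/- The rule =₂ is admissible in the cut-free calculus cf.EQ₁: if Γ ⇒ F{v/r} is derivable in cf.EQ₁ (with axioms, weak structural rules, =₁ and =₁ˡ, no cut), then Γ, s=r ⇒ F{v/s} is derivable in cf.EQ₁. -/

import Mathlib

inductive Tm : Type
  | var : Nat → Tm
  | const : Nat → Tm
  | app : Nat → Tm → Tm

def Tm.subst (v : Nat) (r : Tm) : Tm → Tm
  | .var w => if w = v then r else .var w
  | .const c => .const c
  | .app f t => .app f (Tm.subst v r t)

def Tm.count (v : Nat) : Tm → Nat
  | .var w => if w = v then 1 else 0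
  | .const _ => 0
  | .app _ t => t.count v

inductive Fml : Type
  | eq : Tm → Tm → Fml
  | atom : Nat → Tm → Fml
  | imp : Fml → Fml → Fml
  | and : Fml → Fml → Fml
  | or : Fml → Fml → Fml
  | neg : Fml → Fml
  | all : Nat → Fml → Fml
  | ex : Nat → Fml → Fml

def Fml.subst (v : Nat) (r : Tm) : Fml → Fml
  | .eq t u => .eq (Tm.subst v r t) (Tm.subst v r u)
  | .atom p t => .atom p (Tm.subst v r t)
  | .imp A B => .imp (Fml.subst v r A) (Fml.subst v r B)
  | .and A B => .and (Fml.subst v r A) (Fml.subst v r B)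
  | .or A B => .or (Fml.subst v r A) (Fml.subst v r B)
  | .neg A => .neg (Fml.subst v r A)
  | .all x A => .all x (if x = v then A else Fml.subst v r A)
  | .ex x A => .ex x (if x = v then A else Fml.subst v r A)

def Fml.count (v : Nat) : Fml → Nat
  | .eq t u => t.count v + u.count v
  | .atom _ t => t.count v
  | .imp A B => A.count v + B.count v
  | .and A B => A.count v + B.count v
  | .or A B => A.count v + B.count v
  | .neg A => A.count v
  | .all x A => if x = v then 0 else A.count v
  | .ex x A => if x = v then 0 else A.count v

/-- Tags for the equality rules of the equational sequent calculi. -/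
inductive EqRule | r1 | r2 | l1 | l2 | cng
  deriving DecidableEq

/-- Derivability in the equational sequent calculus.  Sequents have the form
`Γ ⇒ F` with `Γ : List Fml` and `F : Fml`.  The calculus has logical axioms
`F ⇒ F`, reflexivity axioms `⇒ t = t`, the weak left structural rules
(weakening, exchange, contraction), the cut rule (enabled when `cut = true`),
and the equality rules `=₁`, `=₂`, `=₁ˡ`, `=₂ˡ` and `CNG`, each guarded by the
side condition `ok tag F v r s` (where `F` is the changing formula, `v` the
substituted variable and `r`, `s` the terms involved). -/
inductive Der (ok : EqRule → Fml → Nat → Tm → Tm → Prop) (cut : Bool) :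
    List Fml → Fml → Prop
  | ax (F : Fml) : Der ok cut [F] F
  | refl (t : Tm) : Der ok cut [] (.eq t t)
  | wk {Γ H} (F) : Der ok cut Γ H → Der ok cut (F :: Γ) H
  | exch {Γ₁ Γ₂ F G H} : Der ok cut (Γ₁ ++ F :: G :: Γ₂) H →
      Der ok cut (Γ₁ ++ G :: F :: Γ₂) H
  | contr {Γ F H} : Der ok cut (F :: F :: Γ) H → Der ok cut (F :: Γ) H
  | cutr {Γ Λ F H} : cut = true → Der ok cut Γ F → Der ok cut (F :: Λ) H →
      Der ok cut (Γ ++ Λ) H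
  | eq1 {Γ F v r s} : ok .r1 F v r s → Der ok cut Γ (F.subst v r) →
      Der ok cut (.eq r s :: Γ) (F.subst v s)
  | eq2 {Γ F v r s} : ok .r2 F v r s → Der ok cut Γ (F.subst v r) →
      Der ok cut (.eq s r :: Γ) (F.subst v s)
  | eq1l {Γ F v r s H} : ok .l1 F v r s → Der ok cut (F.subst v r :: Γ) H →
      Der ok cut (F.subst v s :: .eq r s :: Γ) H
  | eq2l {Γ F v r s H} : ok .l2 F v r s → Der ok cut (F.subst v r :: Γ) H →
      Der ok cut (F.subst v s :: .eq s r :: Γ) H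
  | cng {Γ Λ F v r s} : ok .cng F v r s → Der ok cut Γ (F.subst v r) →
      Der ok cut Λ (.eq r s) → Der ok cut (Γ ++ Λ) (F.subst v s)

/-- The side condition allowing exactly the equality rules in `tags`,
with no further restriction. -/
def allow (tags : List EqRule) : EqRule → Fml → Nat → Tm → Tm → Prop :=
  fun t _ _ _ _ => t ∈ tags

open Relation

namespace EqAdm

abbrev OKA := allow [EqRule.r1, EqRule.l1]
abbrev D (Γ : List Fml) (C : Fml) : Prop := Der OKA false Γ C

lemma okaR1 {F v r s} : OKA .r1 F v r s := by simp [allow]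
lemma okaL1 {F v r s} : OKA .l1 F v r s := by simp [allow]

/-! ### structural admissibility -/

lemma wkList {Γ C} (Θ : List Fml) (h : D Γ C) : D (Θ ++ Γ) C := by
  induction Θ with
  | nil => exact h
  | cons A Θ ih => exact Der.wk A ih

lemma pullIn {A C Γ₂} : ∀ (Γ₀ Γ₁ : List Fml),
    D (Γ₀ ++ A :: (Γ₁ ++ Γ₂)) C → D (Γ₀ ++ Γ₁ ++ A :: Γ₂) C := by
  intro Γ₀ Γ₁
  induction Γ₁ generalizing Γ₀ with
  | nil => intro h; simpa using h
  | cons B Γ₁ ih =>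
    intro h
    have h2 : D (Γ₀ ++ B :: A :: (Γ₁ ++ Γ₂)) C := Der.exch h
    have h3 : D ((Γ₀ ++ [B]) ++ A :: (Γ₁ ++ Γ₂)) C := by simpa using h2
    have h4 := ih (Γ₀ ++ [B]) h3
    simpa using h4

lemma pullOut {A C Γ₂} : ∀ (Γ₀ Γ₁ : List Fml),
    D (Γ₀ ++ Γ₁ ++ A :: Γ₂) C → D (Γ₀ ++ A :: (Γ₁ ++ Γ₂)) C := by
  intro Γ₀ Γ₁
  induction Γ₁ generalizing Γ₀ with
  | nil => intro h; simpa using h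
  | cons B Γ₁ ih =>
    intro h
    have h3 : D ((Γ₀ ++ [B]) ++ Γ₁ ++ A :: Γ₂) C := by simpa using h
    have h4 := ih (Γ₀ ++ [B]) h3
    have h5 : D (Γ₀ ++ B :: A :: (Γ₁ ++ Γ₂)) C := by simpa using h4
    have h6 : D (Γ₀ ++ A :: B :: (Γ₁ ++ Γ₂)) C := Der.exch h5
    simpa using h6

lemma wkTail {Γ C} (Θ : List Fml) (h : D Γ C) : D (Γ ++ Θ) C := by
  induction Θ with
  | nil => simpa using h
  | cons A Θ ih =>
    have h1 : D (A :: (Γ ++ Θ)) C := Der.wk A ih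
    have h2 := pullIn ([] : List Fml) Γ (by simpa using h1)
    simpa using h2

lemma proj {A Γ} (h : A ∈ Γ) : D Γ A := by
  obtain ⟨Γ₁, Γ₂, rfl⟩ := List.append_of_mem h
  have h1 : D ([A] ++ Γ₂) A := wkTail Γ₂ (Der.ax A)
  have h2 := wkList Γ₁ h1
  simpa using h2

lemma absHead {A Γ C} (hm : A ∈ Γ) (h : D (A :: Γ) C) : D Γ C := by
  obtain ⟨Γ₁, Γ₂, rfl⟩ := List.append_of_mem hm
  have h1 : D (([] : List Fml) ++ (A :: Γ₁) ++ A :: Γ₂) C := by simpa using h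
  have h2 := pullOut ([] : List Fml) (A :: Γ₁) h1
  have h3 : D (A :: A :: (Γ₁ ++ Γ₂)) C := by simpa using h2
  have h4 : D (A :: (Γ₁ ++ Γ₂)) C := Der.contr h3
  have h5 := pullIn ([] : List Fml) Γ₁ (by simpa using h4)
  simpa using h5

/-- set-based weakening/contraction/exchange admissibility -/
lemma STR {Γ C} (h : D Γ C) : ∀ (Γ' : List Fml), (∀ A ∈ Γ, A ∈ Γ') → D Γ' C := by
  induction h with
  | ax F => intro Γ' hs; exact proj (hs F (by simp))
  | refl t => intro Γ' _; simpa using wkTail Γ' (Der.refl t)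
  | wk F _ ih =>
    intro Γ' hs
    exact ih Γ' (fun A hA => hs A (by simp [hA]))
  | exch _ ih =>
    intro Γ' hs
    refine ih Γ' (fun A hA => hs A ?_)
    simp only [List.mem_append, List.mem_cons] at hA ⊢
    tauto
  | contr _ ih =>
    intro Γ' hs
    refine ih Γ' (fun A hA => hs A ?_)
    simp only [List.mem_cons] at hA ⊢
    tauto
  | cutr hcut _ _ _ _ => simp at hcut
  | eq1 hok _ ih =>
    intro Γ' hs
    have h1 := ih Γ' (fun A hA => hs A (by simp [hA]))
    exact absHead (hs _ (by simp)) (Der.eq1 hok h1)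
  | eq1l hok _ ih =>
    rename_i Γ₀ F v r s H _
    intro Γ' hs
    have h1 := ih (F.subst v r :: Γ') ?_
    · have h2 := Der.eq1l hok h1
      have h3 : D (Fml.eq r s :: Γ') H :=
        absHead (List.mem_cons_of_mem _ (hs _ (by simp))) h2
      exact absHead (hs _ (by simp)) h3
    · intro A hA
      rcases List.mem_cons.1 hA with h | h
      · simp [h]
      · exact List.mem_cons_of_mem _ (hs A (by simp [h]))
  | eq2 hok _ _ => simp [allow] at hok
  | eq2l hok _ _ => simp [allow] at hok
  | cng hok _ _ _ _ => simp [allow] at hok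

end EqAdm
namespace EqAdm

/-! ### chains (term contexts) -/

def fill (L : List Nat) (t : Tm) : Tm := L.foldr Tm.app t

@[simp] lemma fill_nil (t : Tm) : fill [] t = t := rfl
@[simp] lemma fill_cons (f : Nat) (L : List Nat) (t : Tm) :
    fill (f :: L) t = Tm.app f (fill L t) := rfl

lemma fill_append (L₁ L₂ : List Nat) (t : Tm) :
    fill (L₁ ++ L₂) t = fill L₁ (fill L₂ t) := by
  simp [fill, List.foldr_append]

lemma fill_subst (L : List Nat) (u : Tm) (w : Nat) (c : Tm) :
    Tm.subst w c (fill L u) = fill L (Tm.subst w c u) := by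
  induction L with
  | nil => rfl
  | cons f L ih =>
    show Tm.app f (Tm.subst w c (fill L u)) = Tm.app f (fill L (Tm.subst w c u))
    rw [ih]

@[simp] lemma substT_var_self (w : Nat) (c : Tm) : Tm.subst w c (.var w) = c := by
  simp [Tm.subst]

@[simp] lemma fill_subst_var (L : List Nat) (w : Nat) (c : Tm) :
    Tm.subst w c (fill L (.var w)) = fill L c := by
  simp [fill_subst, Tm.subst]

lemma fill_comp (L₁ : List Nat) (a₁ : Tm) :
    ∀ L₂ a₂, fill L₁ a₁ = fill L₂ a₂ →
    (∃ M, L₂ = L₁ ++ M ∧ a₁ = fill M a₂) ∨ (∃ M, L₁ = L₂ ++ M ∧ a₂ = fill M a₁) := by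
  induction L₁ with
  | nil => intro L₂ a₂ h; exact Or.inl ⟨L₂, rfl, h⟩
  | cons f L₁ ih =>
    intro L₂ a₂ h
    cases L₂ with
    | nil => exact Or.inr ⟨f :: L₁, rfl, h.symm⟩
    | cons g L₂ =>
      simp only [fill_cons, Tm.app.injEq] at h
      obtain ⟨rfl, h2⟩ := h
      rcases ih L₂ a₂ h2 with ⟨M, rfl, hM⟩ | ⟨M, rfl, hM⟩
      · exact Or.inl ⟨M, rfl, hM⟩
      · exact Or.inr ⟨M, rfl, hM⟩

/-! ### max-variable bounds and freshness -/

def mvT : Tm → Nat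
  | .var w => w
  | .const _ => 0
  | .app _ t => mvT t

def mvF : Fml → Nat
  | .eq t u => max (mvT t) (mvT u)
  | .atom _ t => mvT t
  | .imp A B => max (mvF A) (mvF B)
  | .and A B => max (mvF A) (mvF B)
  | .or A B => max (mvF A) (mvF B)
  | .neg A => mvF A
  | .all x A => max x (mvF A)
  | .ex x A => max x (mvF A)

@[simp] lemma mvT_fill (L : List Nat) (t : Tm) : mvT (fill L t) = mvT t := by
  induction L with
  | nil => rfl
  | cons f L ih => exact ih

lemma countT_zero {t : Tm} {w : Nat} (h : mvT t < w) : Tm.count w t = 0 := by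
  induction t with
  | var u => simp [mvT] at h; simp [Tm.count]; omega
  | const c => simp [Tm.count]
  | app f t ih => simp [mvT] at h; simp [Tm.count]; exact ih h

lemma substT_id {t : Tm} {w : Nat} (h : Tm.count w t = 0) (c : Tm) :
    Tm.subst w c t = t := by
  induction t with
  | var u => simp [Tm.count] at h; simp [Tm.subst, h]
  | const c => rfl
  | app f t ih => simp [Tm.count] at h; simp [Tm.subst, ih h]

lemma countF_zero {F : Fml} {w : Nat} (h : mvF F < w) : Fml.count w F = 0 := by
  induction F with
  | eq t u => simp [mvF] at h; simp [Fml.count, countT_zero h.1, countT_zero h.2]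
  | atom p t => simp [mvF] at h; simp [Fml.count, countT_zero h]
  | imp A B ihA ihB => simp [mvF] at h; simp [Fml.count, ihA h.1, ihB h.2]
  | and A B ihA ihB => simp [mvF] at h; simp [Fml.count, ihA h.1, ihB h.2]
  | or A B ihA ihB => simp [mvF] at h; simp [Fml.count, ihA h.1, ihB h.2]
  | neg A ihA => simp [mvF] at h; simp [Fml.count, ihA h]
  | all x A ihA =>
    simp [mvF] at h
    simp [Fml.count, ihA h.2]
  | ex x A ihA =>
    simp [mvF] at h
    simp [Fml.count, ihA h.2]

lemma substF_id {F : Fml} {w : Nat} (h : Fml.count w F = 0) (c : Tm) :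
    Fml.subst w c F = F := by
  induction F with
  | eq t u =>
    simp [Fml.count] at h
    simp [Fml.subst, substT_id h.1, substT_id h.2]
  | atom p t => simp [Fml.count] at h; simp [Fml.subst, substT_id h]
  | imp A B ihA ihB => simp [Fml.count] at h; simp [Fml.subst, ihA h.1, ihB h.2]
  | and A B ihA ihB => simp [Fml.count] at h; simp [Fml.subst, ihA h.1, ihB h.2]
  | or A B ihA ihB => simp [Fml.count] at h; simp [Fml.subst, ihA h.1, ihB h.2]
  | neg A ihA => simp [Fml.count] at h; simp [Fml.subst, ihA h]
  | all x A ihA =>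
    by_cases hx : x = w
    · simp [Fml.subst, hx]
    · simp [Fml.count, hx] at h
      simp [Fml.subst, hx, ihA h]
  | ex x A ihA =>
    by_cases hx : x = w
    · simp [Fml.subst, hx]
    · simp [Fml.count, hx] at h
      simp [Fml.subst, hx, ihA h]

lemma substF_id' {F : Fml} {w : Nat} (h : mvF F < w) (c : Tm) :
    Fml.subst w c F = F := substF_id (countF_zero h) c

/-- variable bound of a pattern in terms of its instance -/
lemma mvT_subst_bound (X : Tm) (w : Nat) (ρ : Tm) :
    mvT X ≤ max (mvT (Tm.subst w ρ X)) w := by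
  induction X with
  | var u =>
    by_cases hu : u = w
    · simp [hu, mvT]
    · simp [Tm.subst, hu, mvT]
  | const c => simp [mvT]
  | app f t ih => simpa [Tm.subst, mvT] using ih

lemma mvF_subst_bound (X : Fml) (w : Nat) (ρ : Tm) :
    mvF X ≤ max (mvF (Fml.subst w ρ X)) w := by
  induction X with
  | eq t u =>
    have h1 := mvT_subst_bound t w ρ
    have h2 := mvT_subst_bound u w ρ
    simp [Fml.subst, mvF] at *
    omega
  | atom p t => simpa [Fml.subst, mvF] using mvT_subst_bound t w ρ
  | imp A B ihA ihB => simp only [Fml.subst, mvF] at *; omega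
  | and A B ihA ihB => simp only [Fml.subst, mvF] at *; omega
  | or A B ihA ihB => simp only [Fml.subst, mvF] at *; omega
  | neg A ihA => simpa only [Fml.subst, mvF] using ihA
  | all x A ihA =>
    by_cases hx : x = w
    · subst hx; simp [Fml.subst, mvF]
    · simp only [Fml.subst, mvF, hx, if_false] at *; omega
  | ex x A ihA =>
    by_cases hx : x = w
    · subst hx; simp [Fml.subst, mvF]
    · simp only [Fml.subst, mvF, hx, if_false] at *; omega

/-- renaming the pattern variable -/
lemma rnT (X : Tm) {w w₀ : Nat} (hf : mvT X < w₀) (hne : w₀ ≠ w) (ρ : Tm) :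
    Tm.subst w₀ ρ (Tm.subst w (.var w₀) X) = Tm.subst w ρ X := by
  induction X with
  | var u =>
    by_cases hu : u = w
    · simp [Tm.subst, hu]
    · simp [mvT] at hf
      simp [Tm.subst, hu]
      omega
  | const c => rfl
  | app f t ih => simp [mvT] at hf; simp [Tm.subst, ih hf]

lemma rnF (X : Fml) {w w₀ : Nat} (hf : mvF X < w₀) (hne : w₀ ≠ w) (ρ : Tm) :
    Fml.subst w₀ ρ (Fml.subst w (.var w₀) X) = Fml.subst w ρ X := by
  induction X with
  | eq t u =>
    simp [mvF] at hf
    simp [Fml.subst, rnT t hf.1 hne, rnT u hf.2 hne]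
  | atom p t => simp [mvF] at hf; simp [Fml.subst, rnT t hf hne]
  | imp A B ihA ihB => simp [mvF] at hf; simp [Fml.subst, ihA hf.1, ihB hf.2]
  | and A B ihA ihB => simp [mvF] at hf; simp [Fml.subst, ihA hf.1, ihB hf.2]
  | or A B ihA ihB => simp [mvF] at hf; simp [Fml.subst, ihA hf.1, ihB hf.2]
  | neg A ihA => simp [mvF] at hf; simp [Fml.subst, ihA hf]
  | all x A ihA =>
    simp [mvF] at hf
    by_cases hx : x = w
    · subst hx
      have : ¬ (x = w₀) := by omega
      simp [Fml.subst, this]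
      exact substF_id' (by omega) ρ
    · have : ¬ (x = w₀) := by omega
      simp [Fml.subst, hx, this, ihA hf.2]
  | ex x A ihA =>
    simp [mvF] at hf
    by_cases hx : x = w
    · subst hx
      have : ¬ (x = w₀) := by omega
      simp [Fml.subst, this]
      exact substF_id' (by omega) ρ
    · have : ¬ (x = w₀) := by omega
      simp [Fml.subst, hx, this, ihA hf.2]

end EqAdm
namespace EqAdm

/-! ### parallel suffix-rewrite relations -/

/-- single optional suffix rewrite by a pair of `R` -/
def TRr (R : Tm → Tm → Prop) (t t' : Tm) : Prop :=
  t = t' ∨ ∃ ρ σ L, R ρ σ ∧ t = fill L ρ ∧ t' = fill L σ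

/-- parallel formula rewrite: each term slot gets at most one suffix rewrite -/
inductive FRr (R : Tm → Tm → Prop) : Fml → Fml → Prop
  | eq {t t' u u'} : TRr R t t' → TRr R u u' → FRr R (.eq t u) (.eq t' u')
  | atom (p) {t t'} : TRr R t t' → FRr R (.atom p t) (.atom p t')
  | imp {A A' B B'} : FRr R A A' → FRr R B B' → FRr R (.imp A B) (.imp A' B')
  | and {A A' B B'} : FRr R A A' → FRr R B B' → FRr R (.and A B) (.and A' B')
  | or {A A' B B'} : FRr R A A' → FRr R B B' → FRr R (.or A B) (.or A' B')
  | neg {A A'} : FRr R A A' → FRr R (.neg A) (.neg A')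
  | all (x) {A A'} : FRr R A A' → FRr R (.all x A) (.all x A')
  | ex (x) {A A'} : FRr R A A' → FRr R (.ex x A) (.ex x A')

lemma TRr_refl {R} (t : Tm) : TRr R t t := Or.inl rfl

lemma FRr_refl {R} (C : Fml) : FRr R C C := by
  induction C with
  | eq t u => exact FRr.eq (TRr_refl t) (TRr_refl u)
  | atom p t => exact FRr.atom p (TRr_refl t)
  | imp A B ihA ihB => exact FRr.imp ihA ihB
  | and A B ihA ihB => exact FRr.and ihA ihB
  | or A B ihA ihB => exact FRr.or ihA ihB
  | neg A ihA => exact FRr.neg ihA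
  | all x A ihA => exact FRr.all x ihA
  | ex x A ihA => exact FRr.ex x ihA

lemma TRr_mono {R R' : Tm → Tm → Prop} (hR : ∀ a b, R a b → R' a b) {t t'} :
    TRr R t t' → TRr R' t t' := by
  rintro (rfl | ⟨ρ, σ, L, hr, rfl, rfl⟩)
  · exact Or.inl rfl
  · exact Or.inr ⟨ρ, σ, L, hR _ _ hr, rfl, rfl⟩

lemma FRr_mono {R R' : Tm → Tm → Prop} (hR : ∀ a b, R a b → R' a b) {C C'} :
    FRr R C C' → FRr R' C C' := by
  intro h
  induction h with
  | eq h1 h2 => exact FRr.eq (TRr_mono hR h1) (TRr_mono hR h2)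
  | atom p h1 => exact FRr.atom p (TRr_mono hR h1)
  | imp _ _ ih1 ih2 => exact FRr.imp ih1 ih2
  | and _ _ ih1 ih2 => exact FRr.and ih1 ih2
  | or _ _ ih1 ih2 => exact FRr.or ih1 ih2
  | neg _ ih => exact FRr.neg ih
  | all x _ ih => exact FRr.all x ih
  | ex x _ ih => exact FRr.ex x ih

/-! ### single pattern-substitution steps -/

/-- one application-shaped rewrite step: a pattern instantiated two ways -/
def Step (R : Tm → Tm → Prop) (C C' : Fml) : Prop :=
  ∃ X w ρ σ, R ρ σ ∧ Fml.subst w ρ X = C ∧ Fml.subst w σ X = C'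

lemma Step.lift {R} (f : Fml → Fml) (N : Nat)
    (hf : ∀ (X : Fml) (w : Nat) (t : Tm), N < w →
      Fml.subst w t (f X) = f (Fml.subst w t X))
    {A B : Fml} (h : Step R A B) : Step R (f A) (f B) := by
  obtain ⟨X, w, ρ, σ, hR, h1, h2⟩ := h
  set w₀ := max N (max (mvF A) w) + 1 with hw₀
  have hXb : mvF X ≤ max (mvF A) w := by
    have := mvF_subst_bound X w ρ
    rw [h1] at this; exact this
  have hfresh : mvF X < w₀ := by omega
  have hne : w₀ ≠ w := by omega
  have e1 : Fml.subst w₀ ρ (Fml.subst w (.var w₀) X) = A := by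
    rw [rnF X hfresh hne ρ, h1]
  have e2 : Fml.subst w₀ σ (Fml.subst w (.var w₀) X) = B := by
    rw [rnF X hfresh hne σ, h2]
  refine ⟨f (Fml.subst w (.var w₀) X), w₀, ρ, σ, hR, ?_, ?_⟩
  · rw [hf _ _ _ (by omega), e1]
  · rw [hf _ _ _ (by omega), e2]

lemma rtgLift {R} (f : Fml → Fml) (N : Nat)
    (hf : ∀ (X : Fml) (w : Nat) (t : Tm), N < w →
      Fml.subst w t (f X) = f (Fml.subst w t X))
    {A B : Fml} (h : ReflTransGen (Step R) A B) :
    ReflTransGen (Step R) (f A) (f B) :=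
  ReflTransGen.lift f (fun _ _ hs => Step.lift f N hf hs) _ _ h

/-- decompose a parallel rewrite into single steps -/
lemma SEQr {R C C'} (h : FRr R C C') : ReflTransGen (Step R) C C' := by
  induction h with
  | @eq t t' u u' h1 h2 =>
    have s1 : ReflTransGen (Step R) (.eq t u) (.eq t' u) := by
      rcases h1 with rfl | ⟨ρ, σ, L, hr, rfl, rfl⟩
      · exact ReflTransGen.refl
      · refine ReflTransGen.single ?_
        have hu : ∀ c : Tm, Tm.subst (mvT u + 1) c u = u :=
          fun c => substT_id (countT_zero (by omega)) c
        exact ⟨.eq (fill L (.var (mvT u + 1))) u, mvT u + 1, ρ, σ, hr,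
          by simp [Fml.subst, hu], by simp [Fml.subst, hu]⟩
    have s2 : ReflTransGen (Step R) (.eq t' u) (.eq t' u') := by
      rcases h2 with rfl | ⟨ρ, σ, L, hr, rfl, rfl⟩
      · exact ReflTransGen.refl
      · refine ReflTransGen.single ?_
        have hu : ∀ c : Tm, Tm.subst (mvT t' + 1) c t' = t' :=
          fun c => substT_id (countT_zero (by omega)) c
        exact ⟨.eq t' (fill L (.var (mvT t' + 1))), mvT t' + 1, ρ, σ, hr,
          by simp [Fml.subst, hu], by simp [Fml.subst, hu]⟩
    exact s1.trans s2
  | @atom p t t' h1 =>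
    rcases h1 with rfl | ⟨ρ, σ, L, hr, rfl, rfl⟩
    · exact ReflTransGen.refl
    · refine ReflTransGen.single ?_
      refine ⟨.atom p (fill L (.var 0)), 0, ρ, σ, hr, ?_, ?_⟩ <;>
        simp [Fml.subst]
  | @imp A A' B B' _ _ ih1 ih2 =>
    have s1 := rtgLift (fun C => Fml.imp C B) (mvF B)
      (fun X w t hw => by simp [Fml.subst, substF_id' (show mvF B < w by omega)]) ih1
    have s2 := rtgLift (fun C => Fml.imp A' C) (mvF A')
      (fun X w t hw => by simp [Fml.subst, substF_id' (show mvF A' < w by omega)]) ih2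
    exact s1.trans s2
  | @and A A' B B' _ _ ih1 ih2 =>
    have s1 := rtgLift (fun C => Fml.and C B) (mvF B)
      (fun X w t hw => by simp [Fml.subst, substF_id' (show mvF B < w by omega)]) ih1
    have s2 := rtgLift (fun C => Fml.and A' C) (mvF A')
      (fun X w t hw => by simp [Fml.subst, substF_id' (show mvF A' < w by omega)]) ih2
    exact s1.trans s2
  | @or A A' B B' _ _ ih1 ih2 =>
    have s1 := rtgLift (fun C => Fml.or C B) (mvF B)
      (fun X w t hw => by simp [Fml.subst, substF_id' (show mvF B < w by omega)]) ih1
    have s2 := rtgLift (fun C => Fml.or A' C) (mvF A')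
      (fun X w t hw => by simp [Fml.subst, substF_id' (show mvF A' < w by omega)]) ih2
    exact s1.trans s2
  | @neg A A' _ ih =>
    exact rtgLift Fml.neg 0 (fun X w t _ => by simp [Fml.subst]) ih
  | @all x A A' _ ih =>
    exact rtgLift (Fml.all x) x
      (fun X w t hw => by
        have : ¬ (x = w) := by omega
        simp [Fml.subst, this]) ih
  | @ex x A A' _ ih =>
    exact rtgLift (Fml.ex x) x
      (fun X w t hw => by
        have : ¬ (x = w) := by omega
        simp [Fml.subst, this]) ih

/-! ### walking chains in derivations -/

/-- walk a chain on the succedent (each step by `eq1` + absorption) -/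
lemma walkSucc {R : Tm → Tm → Prop} {Θ : List Fml}
    (mor : ∀ ρ σ (H : Fml), R ρ σ → D (.eq ρ σ :: Θ) H → D Θ H)
    {C C'} (h : ReflTransGen (Step R) C C') (hD : D Θ C) : D Θ C' := by
  induction h with
  | refl => exact hD
  | tail _ hstep ih =>
    obtain ⟨X, w, ρ, σ, hR, rfl, rfl⟩ := hstep
    exact mor ρ σ _ hR (Der.eq1 okaR1 ih)

/-- walk a chain backwards on a hypothesis (each step by `eq1l` + absorption) -/
lemma axWalk {R : Tm → Tm → Prop} {Θ : List Fml}
    (hyp : ∀ ρ σ, R ρ σ → Fml.eq σ ρ ∈ Θ)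
    {C C' H} (h : ReflTransGen (Step R) C C') (hD : D (C' :: Θ) H) :
    D (C :: Θ) H := by
  induction h using ReflTransGen.head_induction_on with
  | refl => exact hD
  | head hstep _ ih =>
    obtain ⟨X, w, ρ, σ, hR, rfl, rfl⟩ := hstep
    have h1 : D (Fml.subst w ρ X :: .eq σ ρ :: Θ) H :=
      Der.eq1l (F := X) (v := w) (r := σ) (s := ρ) okaL1 ih
    refine STR h1 _ ?_
    intro A hA
    rcases List.mem_cons.1 hA with rfl | hA
    · simp
    · rcases List.mem_cons.1 hA with rfl | hA
      · exact List.mem_cons_of_mem _ (hyp ρ σ hR)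
      · exact List.mem_cons_of_mem _ hA

end EqAdm
namespace EqAdm

def memR (E : List (Tm × Tm)) : Tm → Tm → Prop := fun a b => (a, b) ∈ E

def hyps (E : List (Tm × Tm)) : List Fml := E.map fun q => Fml.eq q.2 q.1

@[simp] lemma hyps_nil : hyps [] = [] := rfl
@[simp] lemma hyps_cons (q : Tm × Tm) (E : List (Tm × Tm)) :
    hyps (q :: E) = Fml.eq q.2 q.1 :: hyps E := rfl
lemma hyps_append (E₁ E₂ : List (Tm × Tm)) :
    hyps (E₁ ++ E₂) = hyps E₁ ++ hyps E₂ := by simp [hyps]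

lemma mem_hyps {a b : Tm} {E : List (Tm × Tm)} (h : (a, b) ∈ E) :
    Fml.eq b a ∈ hyps E := by
  simp only [hyps, List.mem_map]
  exact ⟨(a, b), h, rfl⟩

lemma substT_fresh (b : Tm) (c : Tm) : Tm.subst (mvT b + 1) c b = b :=
  substT_id (countT_zero (by omega)) c

/-! ### the refl leaf -/

lemma reflCase {E : List (Tm × Tm)} {t t₁ t₂ : Tm}
    (h1 : TRr (memR E) t t₁) (h2 : TRr (memR E) t t₂) :
    D (hyps E) (.eq t₁ t₂) := by
  rcases h1 with rfl | ⟨a₁, b₁, L₁, hm₁, rfl, rfl⟩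
  · rcases h2 with rfl | ⟨a₂, b₂, L₂, hm₂, rfl, rfl⟩
    · simpa using wkTail (hyps E) (Der.refl t)
    · -- goal : eq (fill L₂ a₂) (fill L₂ b₂)
      set w₀ := mvT b₂ + 1
      have base : D [] (.eq (fill L₂ b₂) (fill L₂ b₂)) := Der.refl _
      have prem : D [] (Fml.subst w₀ b₂ (.eq (fill L₂ (.var w₀)) (fill L₂ b₂))) := by
        simpa [Fml.subst, fill_subst, substT_var_self, substT_fresh, w₀] using base
      have step := Der.eq1 (F := .eq (fill L₂ (.var w₀)) (fill L₂ b₂))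
        (v := w₀) (r := b₂) (s := a₂) okaR1 prem
      simp only [Fml.subst, fill_subst, substT_var_self, substT_fresh, w₀] at step
      refine STR step _ ?_
      intro A hA
      rcases List.mem_cons.1 hA with rfl | hA
      · exact mem_hyps hm₂
      · simp at hA
  · rcases h2 with rfl | ⟨a₂, b₂, L₂, hm₂, hL, rfl⟩
    · -- goal : eq (fill L₁ b₁) (fill L₁ a₁)
      set w₀ := mvT b₁ + 1
      have base : D [] (.eq (fill L₁ b₁) (fill L₁ b₁)) := Der.refl _
      have prem : D [] (Fml.subst w₀ b₁ (.eq (fill L₁ b₁) (fill L₁ (.var w₀)))) := by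
        simpa [Fml.subst, fill_subst, substT_var_self, substT_fresh, w₀] using base
      have step := Der.eq1 (F := .eq (fill L₁ b₁) (fill L₁ (.var w₀)))
        (v := w₀) (r := b₁) (s := a₁) okaR1 prem
      simp only [Fml.subst, fill_subst, substT_var_self, substT_fresh, w₀] at step
      refine STR step _ ?_
      intro A hA
      rcases List.mem_cons.1 hA with rfl | hA
      · exact mem_hyps hm₁
      · simp at hA
    · -- both sides rewritten
      rcases fill_comp L₁ a₁ L₂ a₂ hL with ⟨M, rfl, hM⟩ | ⟨M, rfl, hM⟩
      · -- L₂ = L₁ ++ M, a₁ = fill M a₂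
        set w₀ := mvT b₁ + 1
        have base : D [] (.eq (fill L₁ b₁) (fill L₁ b₁)) := Der.refl _
        have prem : D [] (Fml.subst w₀ b₁ (.eq (fill L₁ b₁) (fill L₁ (.var w₀)))) := by
          simpa [Fml.subst, fill_subst, substT_var_self, substT_fresh, w₀] using base
        have step := Der.eq1 (F := .eq (fill L₁ b₁) (fill L₁ (.var w₀)))
          (v := w₀) (r := b₁) (s := fill M b₂) okaR1 prem
        simp only [Fml.subst, fill_subst, substT_var_self, substT_fresh, w₀] at step
        -- step : D [.eq b₁ (fill M b₂)] (.eq (fill L₁ b₁) (fill L₁ (fill M b₂)))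
        have prem2 : D (Fml.subst w₀ b₂ (.eq b₁ (fill M (.var w₀))) :: [])
            (.eq (fill L₁ b₁) (fill L₁ (fill M b₂))) := by
          simpa [Fml.subst, fill_subst, substT_var_self, substT_fresh, w₀] using step
        have step2 := Der.eq1l (F := .eq b₁ (fill M (.var w₀)))
          (v := w₀) (r := b₂) (s := a₂) okaL1 prem2
        simp only [Fml.subst, fill_subst, substT_var_self, substT_fresh, w₀] at step2
        rw [fill_append]
        refine STR step2 _ ?_
        intro A hA
        rcases List.mem_cons.1 hA with rfl | hA
        · rw [← hM]; exact mem_hyps hm₁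
        · rcases List.mem_cons.1 hA with rfl | hA
          · exact mem_hyps hm₂
          · simp at hA
      · -- L₁ = L₂ ++ M, a₂ = fill M a₁
        set w₀ := mvT b₂ + 1
        have base : D [] (.eq (fill L₂ b₂) (fill L₂ b₂)) := Der.refl _
        have prem : D [] (Fml.subst w₀ b₂ (.eq (fill L₂ (.var w₀)) (fill L₂ b₂))) := by
          simpa [Fml.subst, fill_subst, substT_var_self, substT_fresh, w₀] using base
        have step := Der.eq1 (F := .eq (fill L₂ (.var w₀)) (fill L₂ b₂))
          (v := w₀) (r := b₂) (s := fill M b₁) okaR1 prem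
        simp only [Fml.subst, fill_subst, substT_var_self, substT_fresh, w₀] at step
        have prem2 : D (Fml.subst w₀ b₁ (.eq b₂ (fill M (.var w₀))) :: [])
            (.eq (fill L₂ (fill M b₁)) (fill L₂ b₂)) := by
          simpa [Fml.subst, fill_subst, substT_var_self, substT_fresh, w₀] using step
        have step2 := Der.eq1l (F := .eq b₂ (fill M (.var w₀)))
          (v := w₀) (r := b₁) (s := a₁) okaL1 prem2
        simp only [Fml.subst, fill_subst, substT_var_self, substT_fresh, w₀] at step2
        rw [fill_append]
        refine STR step2 _ ?_
        intro A hA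
        rcases List.mem_cons.1 hA with rfl | hA
        · rw [← hM]; exact mem_hyps hm₂
        · rcases List.mem_cons.1 hA with rfl | hA
          · exact mem_hyps hm₁
          · simp at hA

end EqAdm
namespace EqAdm

/-! ### the key pullback lemma for the `=₁` case -/

/-- equations available for rebuilding the conclusion from the pulled-back premise:
either the rule equation `r₀ = s₀` itself, or `r₀ = s₀'` where `s₀'` is `s₀` with
a suffix rewritten by a pair of `E`. -/
def ASkey (E : List (Tm × Tm)) (r₀ s₀ : Tm) : Tm → Tm → Prop :=
  fun ρ σ => ρ = r₀ ∧ (σ = s₀ ∨ ∃ a b S, (a, b) ∈ E ∧ s₀ = fill S a ∧ σ = fill S b)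

/-- new pairs created by pulling a rewrite whose redex contains the `s₀`-occurrence
back through the substitution -/
def βgood (E : List (Tm × Tm)) (r₀ s₀ : Tm) (q : Tm × Tm) : Prop :=
  ∃ a A, (a, q.2) ∈ E ∧ a = fill A s₀ ∧ q.1 = fill A r₀

lemma termCase (v₀ : Nat) (p : Tm) :
    Tm.count v₀ p = 0 ∨ ∃ P, p = fill P (.var v₀) := by
  induction p with
  | var u =>
    by_cases hu : u = v₀
    · exact Or.inr ⟨[], by simp [hu]⟩
    · exact Or.inl (by simp [Tm.count, hu])
  | const c => exact Or.inl rfl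
  | app f t ih =>
    rcases ih with h | ⟨P, rfl⟩
    · exact Or.inl (by simpa [Tm.count] using h)
    · exact Or.inr ⟨f :: P, rfl⟩

lemma keyT (E : List (Tm × Tm)) (v₀ : Nat) (r₀ s₀ : Tm) (p u' : Tm)
    (h : TRr (memR E) (Tm.subst v₀ s₀ p) u') :
    ∃ u'' E₂, (∀ q ∈ E₂, βgood E r₀ s₀ q) ∧
      TRr (memR (E₂ ++ E)) (Tm.subst v₀ r₀ p) u'' ∧ TRr (ASkey E r₀ s₀) u'' u' := by
  rcases termCase v₀ p with hc | ⟨P, rfl⟩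
  · rw [substT_id hc] at h
    refine ⟨u', [], by simp, ?_, TRr_refl u'⟩
    rw [substT_id hc]
    exact TRr_mono (fun a b hm => by simp only [memR, List.nil_append] at *; exact hm) h
  · rw [fill_subst_var] at h ⊢
    rcases h with rfl | ⟨a, b, L, hm, hfe, rfl⟩
    · -- slot not rewritten : rebuild with the rule equation itself
      exact ⟨fill P r₀, [], by simp, TRr_refl _,
        Or.inr ⟨r₀, s₀, P, ⟨rfl, Or.inl rfl⟩, rfl, rfl⟩⟩
    · rcases fill_comp P s₀ L a hfe with ⟨M, rfl, hM⟩ | ⟨M, rfl, hM⟩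
      · -- L = P ++ M : redex inside the s₀-occurrence (α)
        refine ⟨fill P r₀, [], by simp, TRr_refl _,
          Or.inr ⟨r₀, fill M b, P, ⟨rfl, Or.inr ⟨a, b, M, hm, hM, rfl⟩⟩, rfl, ?_⟩⟩
        rw [fill_append]
      · -- P = L ++ M : redex contains the s₀-occurrence (β)
        refine ⟨fill L b, [(fill M r₀, b)], ?_, ?_, TRr_refl _⟩
        · intro q hq
          simp only [List.mem_singleton] at hq
          subst hq
          exact ⟨a, M, hm, hM, rfl⟩
        · refine Or.inr ⟨fill M r₀, b, L, ?_, ?_, rfl⟩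
          · simp [memR]
          · rw [fill_append]

lemma keyF (E : List (Tm × Tm)) (v₀ : Nat) (r₀ s₀ : Tm) :
    ∀ (F₀ C' : Fml), FRr (memR E) (Fml.subst v₀ s₀ F₀) C' →
    ∃ C'' E₂, (∀ q ∈ E₂, βgood E r₀ s₀ q) ∧
      FRr (memR (E₂ ++ E)) (Fml.subst v₀ r₀ F₀) C'' ∧ FRr (ASkey E r₀ s₀) C'' C' := by
  have memmono : ∀ (E₁ E₂ : List (Tm × Tm)), (∀ a b, memR E₁ a b → memR (E₂ ++ E₁) a b) := by
    intro E₁ E₂ a b h; simp [memR] at *; exact Or.inr h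
  have memmono2 : ∀ (E₁ E₂ E₃ : List (Tm × Tm)),
      (∀ a b, memR (E₂ ++ E₁) a b → memR ((E₃ ++ E₂) ++ E₁) a b) := by
    intro E₁ E₂ E₃ a b h; simp [memR] at *; tauto
  have memmono3 : ∀ (E₁ E₂ E₃ : List (Tm × Tm)),
      (∀ a b, memR (E₃ ++ E₁) a b → memR ((E₃ ++ E₂) ++ E₁) a b) := by
    intro E₁ E₂ E₃ a b h; simp [memR] at *; tauto
  intro F₀
  induction F₀ with
  | eq t u =>
    intro C' h
    simp only [Fml.subst] at h ⊢
    cases h with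
    | eq h1 h2 =>
      obtain ⟨t'', E₂, hβ₂, hTR₂, hAS₂⟩ := keyT E v₀ r₀ s₀ t _ h1
      obtain ⟨u'', E₃, hβ₃, hTR₃, hAS₃⟩ := keyT E v₀ r₀ s₀ u _ h2
      refine ⟨.eq t'' u'', E₃ ++ E₂, ?_, ?_, FRr.eq hAS₂ hAS₃⟩
      · intro q hq; rcases List.mem_append.1 hq with h | h
        exacts [hβ₃ q h, hβ₂ q h]
      · exact FRr.eq (TRr_mono (memmono2 E E₂ E₃) hTR₂)
          (TRr_mono (memmono3 E E₂ E₃) hTR₃)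
  | atom p t =>
    intro C' h
    simp only [Fml.subst] at h ⊢
    cases h with
    | atom _ h1 =>
      obtain ⟨t'', E₂, hβ₂, hTR₂, hAS₂⟩ := keyT E v₀ r₀ s₀ t _ h1
      exact ⟨.atom p t'', E₂, hβ₂, FRr.atom p hTR₂, FRr.atom p hAS₂⟩
  | imp A B ihA ihB =>
    intro C' h
    simp only [Fml.subst] at h ⊢
    cases h with
    | imp h1 h2 =>
      obtain ⟨A'', E₂, hβ₂, hF₂, hA₂⟩ := ihA _ h1
      obtain ⟨B'', E₃, hβ₃, hF₃, hA₃⟩ := ihB _ h2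
      refine ⟨.imp A'' B'', E₃ ++ E₂, ?_, ?_, FRr.imp hA₂ hA₃⟩
      · intro q hq; rcases List.mem_append.1 hq with h | h
        exacts [hβ₃ q h, hβ₂ q h]
      · exact FRr.imp (FRr_mono (memmono2 E E₂ E₃) hF₂)
          (FRr_mono (memmono3 E E₂ E₃) hF₃)
  | and A B ihA ihB =>
    intro C' h
    simp only [Fml.subst] at h ⊢
    cases h with
    | and h1 h2 =>
      obtain ⟨A'', E₂, hβ₂, hF₂, hA₂⟩ := ihA _ h1
      obtain ⟨B'', E₃, hβ₃, hF₃, hA₃⟩ := ihB _ h2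
      refine ⟨.and A'' B'', E₃ ++ E₂, ?_, ?_, FRr.and hA₂ hA₃⟩
      · intro q hq; rcases List.mem_append.1 hq with h | h
        exacts [hβ₃ q h, hβ₂ q h]
      · exact FRr.and (FRr_mono (memmono2 E E₂ E₃) hF₂)
          (FRr_mono (memmono3 E E₂ E₃) hF₃)
  | or A B ihA ihB =>
    intro C' h
    simp only [Fml.subst] at h ⊢
    cases h with
    | or h1 h2 =>
      obtain ⟨A'', E₂, hβ₂, hF₂, hA₂⟩ := ihA _ h1
      obtain ⟨B'', E₃, hβ₃, hF₃, hA₃⟩ := ihB _ h2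
      refine ⟨.or A'' B'', E₃ ++ E₂, ?_, ?_, FRr.or hA₂ hA₃⟩
      · intro q hq; rcases List.mem_append.1 hq with h | h
        exacts [hβ₃ q h, hβ₂ q h]
      · exact FRr.or (FRr_mono (memmono2 E E₂ E₃) hF₂)
          (FRr_mono (memmono3 E E₂ E₃) hF₃)
  | neg A ihA =>
    intro C' h
    simp only [Fml.subst] at h ⊢
    cases h with
    | neg h1 =>
      obtain ⟨A'', E₂, hβ₂, hF₂, hA₂⟩ := ihA _ h1
      exact ⟨.neg A'', E₂, hβ₂, FRr.neg hF₂, FRr.neg hA₂⟩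
  | all x A ihA =>
    intro C' h
    by_cases hx : x = v₀
    · subst hx
      simp only [Fml.subst, if_true] at h ⊢
      cases h with
      | all _ h1 =>
        refine ⟨_, [], by simp, ?_, FRr_refl _⟩
        exact FRr.all x (FRr_mono (memmono E []) (by simpa using h1))
    · simp only [Fml.subst, hx, if_false] at h ⊢
      cases h with
      | all _ h1 =>
        obtain ⟨A'', E₂, hβ₂, hF₂, hA₂⟩ := ihA _ h1
        exact ⟨.all x A'', E₂, hβ₂, FRr.all x hF₂, FRr.all x hA₂⟩
  | ex x A ihA =>
    intro C' h
    by_cases hx : x = v₀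
    · subst hx
      simp only [Fml.subst, if_true] at h ⊢
      cases h with
      | ex _ h1 =>
        refine ⟨_, [], by simp, ?_, FRr_refl _⟩
        exact FRr.ex x (FRr_mono (memmono E []) (by simpa using h1))
    · simp only [Fml.subst, hx, if_false] at h ⊢
      cases h with
      | ex _ h1 =>
        obtain ⟨A'', E₂, hβ₂, hF₂, hA₂⟩ := ihA _ h1
        exact ⟨.ex x A'', E₂, hβ₂, FRr.ex x hF₂, FRr.ex x hA₂⟩

/-! ### morphing derived equations back to the official hypotheses -/

lemma morASkey {E : List (Tm × Tm)} {r₀ s₀ : Tm} {Θ : List Fml}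
    (hrs : Fml.eq r₀ s₀ ∈ Θ) (hE : ∀ a b, (a, b) ∈ E → Fml.eq b a ∈ Θ) :
    ∀ ρ σ (H : Fml), ASkey E r₀ s₀ ρ σ → D (.eq ρ σ :: Θ) H → D Θ H := by
  rintro ρ σ H ⟨hρ, hσ | ⟨a, b, S, hm, hs₀, hσ⟩⟩ hD <;> rw [hρ, hσ] at hD
  · exact absHead hrs hD
  · set w₀ := mvT r₀ + 1
    have prem : D (Fml.subst w₀ b (.eq r₀ (fill S (.var w₀))) :: Θ) H := by
      simpa [Fml.subst, substT_fresh, w₀] using hD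
    have step := Der.eq1l (F := .eq r₀ (fill S (.var w₀)))
      (v := w₀) (r := b) (s := a) okaL1 prem
    simp only [Fml.subst, fill_subst, substT_var_self, substT_fresh, w₀] at step
    rw [← hs₀] at step
    refine STR step _ ?_
    intro A hA
    rcases List.mem_cons.1 hA with rfl | hA
    · exact hrs
    · rcases List.mem_cons.1 hA with rfl | hA
      · exact hE a b hm
      · exact hA

lemma morphE2 {E : List (Tm × Tm)} {r₀ s₀ : Tm} {Θ : List Fml} {C : Fml}
    (hrs : Fml.eq r₀ s₀ ∈ Θ) (hE : ∀ a b, (a, b) ∈ E → Fml.eq b a ∈ Θ) :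
    ∀ (E₂ : List (Tm × Tm)), (∀ q ∈ E₂, βgood E r₀ s₀ q) →
      D (hyps E₂ ++ Θ) C → D Θ C := by
  intro E₂
  induction E₂ with
  | nil => intro _ h; simpa using h
  | cons q E₂ ih =>
    intro hβ hD
    obtain ⟨x, b⟩ := q
    obtain ⟨a, A, hm, ha, hx⟩ := hβ (x, b) List.mem_cons_self
    simp only [hyps_cons] at hD
    set w₀ := mvT b + 1
    have prem : D (Fml.subst w₀ r₀ (.eq b (fill A (.var w₀))) :: (hyps E₂ ++ Θ)) C := by
      simp only [Fml.subst, fill_subst, substT_var_self, substT_fresh, w₀]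
      rwa [← hx]
    have step := Der.eq1l (F := .eq b (fill A (.var w₀)))
      (v := w₀) (r := r₀) (s := s₀) okaL1 prem
    simp only [Fml.subst, fill_subst, substT_var_self, substT_fresh, w₀] at step
    rw [← ha] at step
    refine ih (fun q hq => hβ q (by simp [hq])) (STR step _ ?_)
    intro G hG
    rcases List.mem_cons.1 hG with rfl | hG
    · exact List.mem_append_right _ (hE a b hm)
    · rcases List.mem_cons.1 hG with rfl | hG
      · exact List.mem_append_right _ hrs
      · exact hG

end EqAdm
namespace EqAdm

/-- Main generalized claim: rewrites of the succedent by a family of pairs are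
admissible given the (reversed) equations as extra hypotheses. -/
theorem claim {Γ : List Fml} {C : Fml} (h : D Γ C) :
    ∀ (E : List (Tm × Tm)) (C' : Fml), FRr (memR E) C C' → D (hyps E ++ Γ) C' := by
  induction h with
  | ax F =>
    intro E C' hFR
    have hchain := SEQr hFR
    have hstart : D (C' :: hyps E) C' := by
      simpa using wkTail (Γ := [C']) (hyps E) (Der.ax C')
    have hwalk := axWalk (fun ρ σ hr => mem_hyps hr) hchain hstart
    refine STR hwalk _ ?_
    intro A hA
    rcases List.mem_cons.1 hA with rfl | hA
    · simp
    · simp [hA]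
  | refl t =>
    intro E C' hFR
    cases hFR with
    | eq h1 h2 =>
      simpa using reflCase h1 h2
  | wk F _ ih =>
    intro E C' hFR
    refine STR (ih E C' hFR) _ ?_
    intro A hA
    simp only [List.mem_append, List.mem_cons] at hA ⊢
    tauto
  | exch _ ih =>
    intro E C' hFR
    refine STR (ih E C' hFR) _ ?_
    intro A hA
    simp only [List.mem_append, List.mem_cons] at hA ⊢
    tauto
  | contr _ ih =>
    intro E C' hFR
    refine STR (ih E C' hFR) _ ?_
    intro A hA
    simp only [List.mem_append, List.mem_cons] at hA ⊢
    tauto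
  | cutr hcut _ _ _ _ => simp at hcut
  | @eq1 Γ₀ F₀ v₀ r₀ s₀ hok _ ih =>
    intro E C' hFR
    obtain ⟨C'', E₂, hβ, hFR'', hAS⟩ := keyF E v₀ r₀ s₀ F₀ C' hFR
    have h1 := ih (E₂ ++ E) C'' hFR''
    rw [hyps_append] at h1
    set Θg := hyps E ++ (Fml.eq r₀ s₀ :: Γ₀) with hΘg
    have hrsΘ : Fml.eq r₀ s₀ ∈ Θg := by simp [hΘg]
    have hEΘ : ∀ a b, (a, b) ∈ E → Fml.eq b a ∈ Θg := by
      intro a b hm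
      exact List.mem_append_left _ (mem_hyps hm)
    have h2 : D (hyps E₂ ++ Θg) C'' := by
      refine STR h1 _ ?_
      intro A hA
      simp only [List.mem_append, List.mem_cons, hΘg] at hA ⊢
      tauto
    have h3 : D Θg C'' := morphE2 hrsΘ hEΘ E₂ hβ h2
    exact walkSucc (morASkey hrsΘ hEΘ) (SEQr hAS) h3
  | @eq1l Γ₀ F₀ v₀ r₀ s₀ H hok _ ih =>
    intro E C' hFR
    have h1 := ih E C' hFR
    have h2 : D (Fml.subst v₀ r₀ F₀ :: (hyps E ++ Γ₀)) C' := by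
      have := pullOut ([] : List Fml) (hyps E) (by simpa using h1)
      simpa using this
    have h3 := Der.eq1l (F := F₀) (v := v₀) (r := r₀) (s := s₀) okaL1 h2
    refine STR h3 _ ?_
    intro A hA
    simp only [List.mem_append, List.mem_cons] at hA ⊢
    tauto
  | eq2 hok _ _ => simp [allow] at hok
  | eq2l hok _ _ => simp [allow] at hok
  | cng hok _ _ _ _ => simp [allow] at hok

lemma TRsub (r s : Tm) (v : Nat) (t : Tm) :
    TRr (memR [(r, s)]) (Tm.subst v r t) (Tm.subst v s t) := by
  induction t with
  | var u =>
    by_cases hu : u = v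
    · exact Or.inr ⟨r, s, [], by simp [memR], by simp [Tm.subst, hu], by simp [Tm.subst, hu]⟩
    · simp [Tm.subst, hu, TRr_refl]
  | const c => exact TRr_refl _
  | app f t ih =>
    rcases ih with heq | ⟨ρ, σ, L, hm, h1, h2⟩
    · exact Or.inl (by simp [Tm.subst, heq])
    · exact Or.inr ⟨ρ, σ, f :: L, hm, by simp [Tm.subst, h1], by simp [Tm.subst, h2]⟩

lemma FRsub (r s : Tm) (v : Nat) (F : Fml) :
    FRr (memR [(r, s)]) (Fml.subst v r F) (Fml.subst v s F) := by
  induction F with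
  | eq t u => exact FRr.eq (TRsub r s v t) (TRsub r s v u)
  | atom p t => exact FRr.atom p (TRsub r s v t)
  | imp A B ihA ihB => exact FRr.imp ihA ihB
  | and A B ihA ihB => exact FRr.and ihA ihB
  | or A B ihA ihB => exact FRr.or ihA ihB
  | neg A ihA => exact FRr.neg ihA
  | all x A ihA =>
    by_cases hx : x = v
    · subst hx
      simp only [Fml.subst, if_true]
      exact FRr.all x (FRr_refl A)
    · simp only [Fml.subst, hx, if_false]
      exact FRr.all x ihA
  | ex x A ihA =>
    by_cases hx : x = v
    · subst hx
      simp only [Fml.subst, if_true]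
      exact FRr.ex x (FRr_refl A)
    · simp only [Fml.subst, hx, if_false]
      exact FRr.ex x ihA

end EqAdm


/-- The rule `=₂` is admissible in `cf.EQ₁` (the cut-free calculus with `=₁`
and `=₁ˡ`): if `Γ ⇒ F{v/r}` is derivable in `cf.EQ₁`, then so is
`Γ, s=r ⇒ F{v/s}`. -/
theorem eq2_admissible_cfEQ1 (Γ : List Fml) (F : Fml) (v : Nat) (r s : Tm)
    (h : Der (allow [.r1, .l1]) false Γ (F.subst v r)) :
    Der (allow [.r1, .l1]) false (.eq s r :: Γ) (F.subst v s) := by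
  have := EqAdm.claim h [(r, s)] (F.subst v s) (EqAdm.FRsub r s v F)
  simpa [EqAdm.hyps] using this
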